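/- Let G be a finite simple graph and let T be a set of edges of G whose spanning subgraph (on the set of vertices covered by T) has exactly two connected components A and B, where A is a tree and B is connected and contains exactly one cycle (equivalently, B has exactly |V(B)| edges). Let C be a 4-cycle of G with edges e1, f1, e2, f2 in cyclic order such that e1, e2 ∈ T, f1, f2 ∉ T, e1 is an edge of A, and e2 is an edge of the unique cycle of B. Then the edge set T' = (T \ {e1, e2}) ∪ {f1, f2} forms a tree (a connected acyclic graph) on the vertex set V(A) ∪ V(B). -/

import Mathlib

open SimpleGraph

/-- The set of vertices covered by a set of edges. -/
def edgeSupport {V : Type*} (S : Set (Sym2 V)) : Set V := {v | ∃ e ∈ S, v ∈ e}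

namespace FlipAux

variable {V : Type*}

lemma mem_support_left {S : Set (Sym2 V)} {a b : V} (h : s(a, b) ∈ S) :
    a ∈ edgeSupport S := ⟨s(a, b), h, Sym2.mem_mk_left a b⟩

lemma mem_support_right {S : Set (Sym2 V)} {a b : V} (h : s(a, b) ∈ S) :
    b ∈ edgeSupport S := ⟨s(a, b), h, Sym2.mem_mk_right a b⟩

/-- A predicate preserved by adjacency is preserved along walks. -/
lemma walk_support_mem {G : SimpleGraph V} {P : V → Prop}
    (hP : ∀ {a b : V}, G.Adj a b → P a → P b) :
    ∀ {u v : V} (pw : G.Walk u v), P u → ∀ x ∈ pw.support, P x := by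
  intro u v pw
  induction pw with
  | nil => intro hu x hx; simp at hx; subst hx; exact hu
  | cons h pw ih =>
    intro hu x hx
    rw [SimpleGraph.Walk.support_cons] at hx
    rcases List.mem_cons.mp hx with rfl | hx
    · exact hu
    · exact ih (hP h hu) x hx

lemma reachable_invariant {G : SimpleGraph V} {P : V → Prop}
    (hP : ∀ {a b : V}, G.Adj a b → P a → P b) {u v : V}
    (h : G.Reachable u v) (hu : P u) : P v := by
  obtain ⟨pw⟩ := h
  exact walk_support_mem hP pw hu v pw.end_mem_support

/-- Lift reachability into an induced subgraph that contains all edges. -/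
lemma reachable_induce_of_reachable {G : SimpleGraph V} {s : Set V}
    (hG : ∀ {a b : V}, G.Adj a b → a ∈ s ∧ b ∈ s) {u v : V} (hu : u ∈ s) (hv : v ∈ s)
    (h : G.Reachable u v) : (G.induce s).Reachable ⟨u, hu⟩ ⟨v, hv⟩ := by
  obtain ⟨pw⟩ := h
  have hsub : {x | x ∈ pw.support} ⊆ s := by
    intro x hx
    exact walk_support_mem (fun hab ha => (hG hab).2) pw hu x hx
  have hconn := pw.connected_induce_support
  have := hconn ⟨u, pw.start_mem_support⟩ ⟨v, pw.end_mem_support⟩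
  exact this.map (induceHomOfLE _ hsub).toHom

/-- Easy direction: induced subgraph of an acyclic graph is acyclic. -/
lemma induce_isAcyclic {G : SimpleGraph V} (h : G.IsAcyclic) (s : Set V) :
    (G.induce s).IsAcyclic := by
  intro v c hc
  exact h (c.map (SimpleGraph.Embedding.induce (G := G) s).toHom)
    (hc.map (SimpleGraph.Embedding.induce (G := G) s).injective)

/-- Transfer acyclicity of an induced subgraph to the whole graph, provided every edge
has both endpoints inside the inducing set. -/
lemma isAcyclic_of_induce_isAcyclic {G : SimpleGraph V} {s : Set V}
    (hG : ∀ {a b : V}, G.Adj a b → a ∈ s ∧ b ∈ s)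
    (h : (G.induce s).IsAcyclic) : G.IsAcyclic := by
  rw [isAcyclic_iff_forall_adj_isBridge]
  intro x y hxy
  rw [isBridge_iff]
  refine fun hreach => ?_
  obtain ⟨hx, hy⟩ := hG hxy
  have hG' : ∀ {a b : V}, (G \ fromEdgeSet {s(x, y)}).Adj a b → a ∈ s ∧ b ∈ s :=
    fun hab => hG hab.1
  have h2 := reachable_induce_of_reachable hG' hx hy hreach
  have hbr := (isAcyclic_iff_forall_adj_isBridge.mp h)
    (show (G.induce s).Adj ⟨x, hx⟩ ⟨y, hy⟩ from hxy)
  rw [isBridge_iff] at hbr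
  apply hbr
  refine h2.mono ?_
  rintro ⟨a, ha⟩ ⟨b, hb⟩ hab
  rw [comap_adj, sdiff_adj] at hab
  have hab1 : G.Adj a b := hab.1
  have hab2 : s(a, b) ≠ s(x, y) := by
    intro hh
    exact hab.2 (by rw [fromEdgeSet_adj]; exact ⟨by simp [hh], hab1.ne⟩)
  rw [deleteEdges, sdiff_adj]
  refine ⟨hab1, ?_⟩
  rw [fromEdgeSet_adj]
  rintro ⟨h1, -⟩
  apply hab2
  have := congrArg (Sym2.map (Subtype.val : s → V)) (Set.mem_singleton_iff.mp h1)
  simpa using this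

/-- After deleting a single edge, each vertex is still reachable to where it could
walk before, or to one of the two endpoints of the deleted edge. -/
lemma reachable_delete_endpoint_aux {G : SimpleGraph V} (x y : V) {u z : V}
    (pw : G.Walk u z) :
    (G \ fromEdgeSet {s(x, y)}).Reachable u z ∨ (G \ fromEdgeSet {s(x, y)}).Reachable u x ∨
      (G \ fromEdgeSet {s(x, y)}).Reachable u y := by
  induction pw with
  | nil => exact Or.inl (Reachable.refl _)
  | @cons u b z h' rest ih =>
    by_cases he : s(u, b) = s(x, y)
    · rw [Sym2.eq_iff] at he
      rcases he with ⟨rfl, rfl⟩ | ⟨rfl, rfl⟩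
      · exact Or.inr (Or.inl (Reachable.refl _))
      · exact Or.inr (Or.inr (Reachable.refl _))
    · have hadj : (G \ fromEdgeSet {s(x, y)}).Adj u b := by
        rw [sdiff_adj, fromEdgeSet_adj]
        exact ⟨h', fun hh => he hh.1⟩
      rcases ih with h2 | h2 | h2
      · exact Or.inl (hadj.reachable.trans h2)
      · exact Or.inr (Or.inl (hadj.reachable.trans h2))
      · exact Or.inr (Or.inr (hadj.reachable.trans h2))

lemma reachable_delete_endpoint {G : SimpleGraph V} {x y u : V}
    (h : G.Reachable u x) :
    (G \ fromEdgeSet {s(x, y)}).Reachable u x ∨ (G \ fromEdgeSet {s(x, y)}).Reachable u y := by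
  obtain ⟨pw⟩ := h
  rcases reachable_delete_endpoint_aux x y pw with h2 | h2 | h2
  · exact Or.inl h2
  · exact Or.inl h2
  · exact Or.inr h2


lemma tree_card {V : Type*} [Fintype V] {E : Set (Sym2 V)} (hnd : ∀ e ∈ E, ¬ e.IsDiag)
    (htree : ((fromEdgeSet E).induce (edgeSupport E)).IsTree) :
    E.ncard + 1 = (edgeSupport E).ncard := by
  classical
  haveI : Fintype ↥(edgeSupport E) := Fintype.ofFinite _
  haveI : Fintype ((fromEdgeSet E).induce (edgeSupport E)).edgeSet := Fintype.ofFinite _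
  have hcard := htree.card_edgeFinset
  have himg : Sym2.map (Subtype.val : edgeSupport E → V) ''
      ((fromEdgeSet E).induce (edgeSupport E)).edgeSet = E := by
    ext e
    constructor
    · rintro ⟨e', he', rfl⟩
      revert he'
      refine Sym2.ind (fun a b he' => ?_) e'
      rw [mem_edgeSet, comap_adj, fromEdgeSet_adj] at he'
      simpa using he'.1
    · intro he
      revert he
      refine Sym2.ind (fun a b he => ?_) e
      have ha : a ∈ edgeSupport E := mem_support_left he
      have hb : b ∈ edgeSupport E := mem_support_right he
      have hne : a ≠ b := by
        intro hh; exact hnd _ he (by simp [hh])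
      refine ⟨s(⟨a, ha⟩, ⟨b, hb⟩), ?_, by simp⟩
      rw [mem_edgeSet, comap_adj, fromEdgeSet_adj]
      exact ⟨he, hne⟩
  have hinj : Function.Injective (Sym2.map (Subtype.val : edgeSupport E → V)) :=
    Sym2.map.injective Subtype.val_injective
  have h1 : E.ncard = ((fromEdgeSet E).induce (edgeSupport E)).edgeSet.ncard := by
    conv_lhs => rw [← himg]
    exact Set.ncard_image_of_injective _ hinj
  have h2 : ((fromEdgeSet E).induce (edgeSupport E)).edgeSet.ncard =
      ((fromEdgeSet E).induce (edgeSupport E)).edgeFinset.card := by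
    rw [← coe_edgeFinset, Set.ncard_coe_finset]
  have h3 : Fintype.card ↥(edgeSupport E) = (edgeSupport E).ncard := by
    rw [Set.ncard_eq_toFinset_card', Set.toFinset_card]
  omega

end FlipAux

/-- Flipping an alternating 4-cycle that joins a tree component `A` of an edge set `T`
with an edge on the unique cycle of the unicyclic component `B` turns `T` into a tree
on the vertex set `V(A) ∪ V(B)`. -/
theorem flip_alternating_four_cycle_tree
    {V : Type*} [Fintype V] [DecidableEq V]
    (G : SimpleGraph V) (T A B : Set (Sym2 V))
    (hTG : T ⊆ G.edgeSet)
    (hUnion : A ∪ B = T) (hDisj : Disjoint A B)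
    (hVDisj : Disjoint (edgeSupport A) (edgeSupport B))
    -- `A` induces a tree on the vertices it covers
    (hATree : ((SimpleGraph.fromEdgeSet A).induce (edgeSupport A)).IsTree)
    -- `B` induces a connected graph on the vertices it covers, with exactly one cycle
    (hBConn : ((SimpleGraph.fromEdgeSet B).induce (edgeSupport B)).Connected)
    (hBCard : B.ncard = (edgeSupport B).ncard)
    -- a 4-cycle `p q r w` of `G` ...
    (p q r w : V)
    (hpq : p ≠ q) (hpr : p ≠ r) (hpw : p ≠ w) (hqr : q ≠ r) (hqw : q ≠ w) (hrw : r ≠ w)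
    (hGpq : G.Adj p q) (hGqr : G.Adj q r) (hGrw : G.Adj r w) (hGwp : G.Adj w p)
    -- ... whose edges alternate: `e1 = s(p,q) ∈ A ⊆ T`, `e2 = s(r,w) ∈ B ⊆ T`,
    --     `f1 = s(q,r) ∉ T`, `f2 = s(w,p) ∉ T`
    (he1 : s(p, q) ∈ A) (he2 : s(r, w) ∈ B)
    (hf1 : s(q, r) ∉ T) (hf2 : s(w, p) ∉ T)
    -- `e2` lies on the unique cycle of `B`: removing it makes `B` acyclic
    (hCycleEdge : (SimpleGraph.fromEdgeSet (B \ {s(r, w)})).IsAcyclic) :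
    ((SimpleGraph.fromEdgeSet ((T \ {s(p, q), s(r, w)}) ∪ {s(q, r), s(w, p)})).induce
      (edgeSupport A ∪ edgeSupport B)).IsTree := by
  classical
  set sA := edgeSupport A with hsAdef
  set sB := edgeSupport B with hsBdef
  set K0 : Set (Sym2 V) := T \ {s(p, q), s(r, w)} with hK0def
  set T' : Set (Sym2 V) := K0 ∪ {s(q, r), s(w, p)} with hT'def
  have hAT : A ⊆ T := hUnion ▸ Set.subset_union_left
  have hBT : B ⊆ T := hUnion ▸ Set.subset_union_right
  have hpA : p ∈ sA := FlipAux.mem_support_left he1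
  have hqA : q ∈ sA := FlipAux.mem_support_right he1
  have hrB : r ∈ sB := FlipAux.mem_support_left he2
  have hwB : w ∈ sB := FlipAux.mem_support_right he2
  have hdisjV := Set.disjoint_left.mp hVDisj
  have hTnd : ∀ e ∈ T, ¬ e.IsDiag := fun e he => G.not_isDiag_of_mem_edgeSet (hTG he)
  have hf1T' : s(q, r) ∈ T' := Set.mem_union_right _ (by simp)
  have hf2T' : s(w, p) ∈ T' := Set.mem_union_right _ (by simp)
  have hHqr : (fromEdgeSet T').Adj q r := (fromEdgeSet_adj _).mpr ⟨hf1T', hqr⟩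
  have hHwp : (fromEdgeSet T').Adj w p := (fromEdgeSet_adj _).mpr ⟨hf2T', Ne.symm hpw⟩
  have hK0mem : ∀ e ∈ K0, e ∈ A \ {s(p, q)} ∨ e ∈ B \ {s(r, w)} := by
    rintro e ⟨heT, hne⟩
    simp only [Set.mem_insert_iff, Set.mem_singleton_iff, not_or] at hne
    rw [← hUnion] at heT
    rcases heT with h | h
    · exact Or.inl ⟨h, hne.1⟩
    · exact Or.inr ⟨h, hne.2⟩
  have hAsub : A \ {s(p, q)} ⊆ T' := by
    rintro e ⟨heA, hne⟩
    refine Or.inl ⟨hAT heA, ?_⟩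
    simp only [Set.mem_insert_iff, Set.mem_singleton_iff, not_or]
    exact ⟨hne, fun hh => (Set.disjoint_left.mp hDisj heA) (hh ▸ he2)⟩
  have hBsub : B \ {s(r, w)} ⊆ T' := by
    rintro e ⟨heB, hne⟩
    refine Or.inl ⟨hBT heB, ?_⟩
    simp only [Set.mem_insert_iff, Set.mem_singleton_iff, not_or]
    exact ⟨fun hh => (Set.disjoint_right.mp hDisj heB) (hh ▸ he1), hne⟩
  have hA'le : fromEdgeSet (A \ {s(p, q)}) ≤ fromEdgeSet T' := fromEdgeSet_mono hAsub
  have hB'le : fromEdgeSet (B \ {s(r, w)}) ≤ fromEdgeSet T' := fromEdgeSet_mono hBsub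
  have hconf : ∀ {a b : V}, (fromEdgeSet T').Adj a b → a ∈ sA ∪ sB ∧ b ∈ sA ∪ sB := by
    intro a b hab
    rcases ((fromEdgeSet_adj _).mp hab).1 with hK | hfm
    · rcases hK0mem _ hK with ⟨hA2, -⟩ | ⟨hB2, -⟩
      · exact ⟨Or.inl (FlipAux.mem_support_left hA2), Or.inl (FlipAux.mem_support_right hA2)⟩
      · exact ⟨Or.inr (FlipAux.mem_support_left hB2), Or.inr (FlipAux.mem_support_right hB2)⟩
    · simp only [Set.mem_insert_iff, Set.mem_singleton_iff, Sym2.eq_iff] at hfm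
      rcases hfm with (⟨rfl, rfl⟩ | ⟨rfl, rfl⟩) | (⟨rfl, rfl⟩ | ⟨rfl, rfl⟩)
      · exact ⟨Or.inl hqA, Or.inr hrB⟩
      · exact ⟨Or.inr hrB, Or.inl hqA⟩
      · exact ⟨Or.inr hwB, Or.inl hpA⟩
      · exact ⟨Or.inl hpA, Or.inr hwB⟩
  -- acyclicity of `fromEdgeSet A`
  have hAconf : ∀ {a b : V}, (fromEdgeSet A).Adj a b → a ∈ sA ∧ b ∈ sA := fun hab =>
    ⟨FlipAux.mem_support_left ((fromEdgeSet_adj _).mp hab).1,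
      FlipAux.mem_support_right ((fromEdgeSet_adj _).mp hab).1⟩
  have hAacyc : (fromEdgeSet A).IsAcyclic :=
    FlipAux.isAcyclic_of_induce_isAcyclic hAconf hATree.2
  -- p and q are not joined in A minus the flip edge
  have hApq : ¬ (fromEdgeSet (A \ {s(p, q)})).Reachable p q := by
    intro hre
    have h2 : (fromEdgeSet A).Adj p q ∧ (fromEdgeSet A \ fromEdgeSet {s(p, q)}).Reachable p q :=
      ⟨(fromEdgeSet_adj _).mpr ⟨he1, hpq⟩, by rwa [← fromEdgeSet_sdiff]⟩
    obtain ⟨u, c, hc, -⟩ := adj_and_reachable_delete_edges_iff_exists_cycle.mp h2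
    exact hAacyc c hc
  -- r and w remain joined in B minus the flip edge
  have hrw' : (fromEdgeSet (B \ {s(r, w)})).Reachable r w := by
    by_contra hcon
    have hBacyc : (fromEdgeSet B).IsAcyclic := by
      intro v c hc
      by_cases he : s(r, w) ∈ c.edges
      · have h2 := adj_and_reachable_delete_edges_iff_exists_cycle.mpr ⟨v, c, hc, he⟩
        rw [deleteEdges, ← fromEdgeSet_sdiff] at h2
        exact hcon h2.2
      · have hedges : ∀ e ∈ c.edges, e ∈ (fromEdgeSet (B \ {s(r, w)})).edgeSet := by
          intro e hee
          have h1 := c.edges_subset_edgeSet hee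
          rw [edgeSet_fromEdgeSet] at h1 ⊢
          exact ⟨⟨h1.1, fun hh => he (Set.mem_singleton_iff.mp hh ▸ hee)⟩, h1.2⟩
        exact hCycleEdge _ (hc.transfer hedges)
    have hBtree : ((fromEdgeSet B).induce sB).IsTree :=
      ⟨hBConn, FlipAux.induce_isAcyclic hBacyc _⟩
    have hcard := FlipAux.tree_card (fun e he => hTnd e (hBT he)) hBtree
    rw [← hsBdef] at hcard
    omega
  -- reachability facts in the flipped graph
  have hrwH : (fromEdgeSet T').Reachable r w := hrw'.mono hB'le
  have hAreach : ∀ v ∈ sA, (fromEdgeSet A).Reachable v p := by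
    intro v hv
    exact (hATree.1.preconnected ⟨v, hv⟩ ⟨p, hpA⟩).map
      (SimpleGraph.Embedding.induce (G := fromEdgeSet A) sA).toHom
  have hBreach : ∀ v ∈ sB, (fromEdgeSet (B \ {s(r, w)})).Reachable v r := by
    intro v hv
    have h0 : (fromEdgeSet B).Reachable v r :=
      (hBConn.preconnected ⟨v, hv⟩ ⟨r, hrB⟩).map
        (SimpleGraph.Embedding.induce (G := fromEdgeSet B) sB).toHom
    rcases FlipAux.reachable_delete_endpoint (y := w) h0 with h2 | h2
    · rwa [← fromEdgeSet_sdiff] at h2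
    · rw [← fromEdgeSet_sdiff] at h2
      exact h2.trans hrw'.symm
  have hqreach : ∀ v ∈ sA ∪ sB, (fromEdgeSet T').Reachable q v := by
    intro v hv
    rcases hv with hv | hv
    · rcases FlipAux.reachable_delete_endpoint (y := q) (hAreach v hv) with h2 | h2
      · rw [← fromEdgeSet_sdiff] at h2
        exact hHqr.reachable.trans (hrwH.trans (hHwp.reachable.trans (h2.mono hA'le).symm))
      · rw [← fromEdgeSet_sdiff] at h2
        exact (h2.mono hA'le).symm
    · exact hHqr.reachable.trans ((hBreach v hv).mono hB'le).symm
  -- connectivity of the flipped graph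
  have hconn : ((fromEdgeSet T').induce (sA ∪ sB)).Connected := by
    apply SimpleGraph.induce_connected_of_patches (G := fromEdgeSet T') q (Or.inl hqA)
    intro v hv
    obtain ⟨pw⟩ := hqreach v hv
    have hsub : {x | x ∈ pw.support} ⊆ sA ∪ sB := fun x hx =>
      FlipAux.walk_support_mem (fun hab ha => (hconf hab).2) pw (Or.inl hqA) x hx
    exact ⟨{x | x ∈ pw.support}, hsub, pw.start_mem_support, pw.end_mem_support,
      pw.connected_induce_support.preconnected ⟨q, pw.start_mem_support⟩
        ⟨v, pw.end_mem_support⟩⟩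
  -- acyclicity of the flipped graph
  have hK0sideA : ∀ {a b : V}, (fromEdgeSet K0).Adj a b → a ∈ sA → b ∈ sA := by
    intro a b hab ha
    rcases hK0mem _ ((fromEdgeSet_adj _).mp hab).1 with ⟨hA2, -⟩ | ⟨hB2, -⟩
    · exact FlipAux.mem_support_right hA2
    · exact (hdisjV ha (FlipAux.mem_support_left hB2)).elim
  have hK0sideB : ∀ {a b : V}, (fromEdgeSet K0).Adj a b → a ∈ sB → b ∈ sB := by
    intro a b hab ha
    rcases hK0mem _ ((fromEdgeSet_adj _).mp hab).1 with ⟨hA2, -⟩ | ⟨hB2, -⟩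
    · exact (hdisjV (FlipAux.mem_support_left hA2) ha).elim
    · exact FlipAux.mem_support_right hB2
  have hK0acyc : (fromEdgeSet K0).IsAcyclic := by
    intro v c hc
    cases c with
    | nil => exact hc.not_of_nil
    | @cons _ b _ hadj c' =>
      rcases hK0mem _ ((fromEdgeSet_adj _).mp hadj).1 with ⟨hA1, -⟩ | ⟨hB1, -⟩
      · have hvA : v ∈ sA := FlipAux.mem_support_left hA1
        have hsupp := FlipAux.walk_support_mem hK0sideA (SimpleGraph.Walk.cons hadj c') hvA
        have hedges : ∀ e ∈ (SimpleGraph.Walk.cons hadj c').edges,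
            e ∈ (fromEdgeSet (A \ {s(p, q)})).edgeSet := by
          intro e
          induction e using Sym2.ind with
          | _ x y =>
            intro hee
            have h1 := SimpleGraph.Walk.edges_subset_edgeSet _ hee
            rw [edgeSet_fromEdgeSet] at h1 ⊢
            refine ⟨?_, h1.2⟩
            rcases hK0mem _ h1.1 with hA2 | ⟨hB2, -⟩
            · exact hA2
            · exact ((hdisjV
                (hsupp x (SimpleGraph.Walk.fst_mem_support_of_mem_edges _ hee))
                (FlipAux.mem_support_left hB2))).elim
        exact hAacyc _ ((hc.transfer hedges).mapLe (fromEdgeSet_mono Set.diff_subset))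
      · have hvB : v ∈ sB := FlipAux.mem_support_left hB1
        have hsupp := FlipAux.walk_support_mem hK0sideB (SimpleGraph.Walk.cons hadj c') hvB
        have hedges : ∀ e ∈ (SimpleGraph.Walk.cons hadj c').edges,
            e ∈ (fromEdgeSet (B \ {s(r, w)})).edgeSet := by
          intro e
          induction e using Sym2.ind with
          | _ x y =>
            intro hee
            have h1 := SimpleGraph.Walk.edges_subset_edgeSet _ hee
            rw [edgeSet_fromEdgeSet] at h1 ⊢
            refine ⟨?_, h1.2⟩
            rcases hK0mem _ h1.1 with ⟨hA2, -⟩ | hB2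
            · exact ((hdisjV
                (FlipAux.mem_support_left hA2)
                (hsupp x (SimpleGraph.Walk.fst_mem_support_of_mem_edges _ hee)))).elim
            · exact hB2
        exact hCycleEdge _ (hc.transfer hedges)
  have hgen : ∀ (X : Set (Sym2 V)) (y : Sym2 V), y ∉ X → (X ∪ {y}) \ {y} = X := by
    intro X y hy
    ext e
    simp only [Set.mem_diff, Set.mem_union, Set.mem_singleton_iff]
    constructor
    · rintro ⟨h | h, hne⟩
      · exact h
      · exact (hne h).elim
    · intro h
      exact ⟨Or.inl h, fun hh => hy (hh ▸ h)⟩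
  have hK0qr : ¬ (fromEdgeSet K0).Reachable q r := fun h2 =>
    hdisjV (FlipAux.reachable_invariant hK0sideA h2 hqA) hrB
  have hK1acyc : (fromEdgeSet (K0 ∪ {s(q, r)})).IsAcyclic := by
    intro v c hc
    by_cases he : s(q, r) ∈ c.edges
    · have h2 := adj_and_reachable_delete_edges_iff_exists_cycle.mpr ⟨v, c, hc, he⟩
      rw [deleteEdges, ← fromEdgeSet_sdiff,
        hgen K0 (s(q, r)) (fun hh => hf1 hh.1)] at h2
      exact hK0qr h2.2
    · have hedges : ∀ e ∈ c.edges, e ∈ (fromEdgeSet K0).edgeSet := by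
        intro e hee
        have h1 := c.edges_subset_edgeSet hee
        rw [edgeSet_fromEdgeSet] at h1 ⊢
        refine ⟨?_, h1.2⟩
        rcases h1.1 with h | h
        · exact h
        · exact (he (by rwa [Set.mem_singleton_iff.mp h] at hee)).elim
      exact hK0acyc _ (hc.transfer hedges)
  have hT'eq : T' = (K0 ∪ {s(q, r)}) ∪ {s(w, p)} := by
    rw [hT'def, Set.union_assoc]
    congr 1
  have hf2K1 : s(w, p) ∉ K0 ∪ {s(q, r)} := by
    rintro (h | h)
    · exact hf2 h.1
    · rw [Set.mem_singleton_iff, Sym2.eq_iff] at h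
      rcases h with ⟨h1, -⟩ | ⟨h1, -⟩
      · exact hqw h1.symm
      · exact hrw h1.symm
  have hK1wp : ¬ (fromEdgeSet (K0 ∪ {s(q, r)})).Reachable w p := by
    intro h2
    have hPadj : ∀ {a b : V}, (fromEdgeSet (K0 ∪ {s(q, r)})).Adj a b →
        (a ∈ sB ∨ (a ∈ sA ∧ (fromEdgeSet (A \ {s(p, q)})).Reachable q a)) →
        (b ∈ sB ∨ (b ∈ sA ∧ (fromEdgeSet (A \ {s(p, q)})).Reachable q b)) := by
      intro a b hab hPa
      rcases ((fromEdgeSet_adj _).mp hab).1 with hm | hm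
      · rcases hK0mem _ hm with ⟨hA2, hne2⟩ | ⟨hB2, -⟩
        · have haA : a ∈ sA := FlipAux.mem_support_left hA2
          have hbA : b ∈ sA := FlipAux.mem_support_right hA2
          rcases hPa with h | ⟨-, hqa⟩
          · exact (hdisjV haA h).elim
          · refine Or.inr ⟨hbA, hqa.trans (SimpleGraph.Adj.reachable ?_)⟩
            exact (fromEdgeSet_adj _).mpr ⟨⟨hA2, hne2⟩, ((fromEdgeSet_adj _).mp hab).2⟩
        · exact Or.inl (FlipAux.mem_support_right hB2)
      · rw [Set.mem_singleton_iff, Sym2.eq_iff] at hm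
        rcases hm with ⟨rfl, rfl⟩ | ⟨rfl, rfl⟩
        · exact Or.inl hrB
        · exact Or.inr ⟨hqA, Reachable.refl _⟩
    have hPp := FlipAux.reachable_invariant hPadj h2 (Or.inl hwB)
    rcases hPp with h | ⟨-, hqp⟩
    · exact hdisjV hpA h
    · exact hApq hqp.symm
  have hHacyc : (fromEdgeSet T').IsAcyclic := by
    rw [hT'eq]
    intro v c hc
    by_cases he : s(w, p) ∈ c.edges
    · have h2 := adj_and_reachable_delete_edges_iff_exists_cycle.mpr ⟨v, c, hc, he⟩
      rw [deleteEdges, ← fromEdgeSet_sdiff, hgen _ _ hf2K1] at h2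
      exact hK1wp h2.2
    · have hedges : ∀ e ∈ c.edges, e ∈ (fromEdgeSet (K0 ∪ {s(q, r)})).edgeSet := by
        intro e hee
        have h1 := c.edges_subset_edgeSet hee
        rw [edgeSet_fromEdgeSet] at h1 ⊢
        refine ⟨?_, h1.2⟩
        rcases h1.1 with h | h
        · exact h
        · exact (he (by rwa [Set.mem_singleton_iff.mp h] at hee)).elim
      exact hK1acyc _ (hc.transfer hedges)
  exact ⟨hconn, FlipAux.induce_isAcyclic hHacyc _⟩
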